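/- Let q = p^n ≡ 3 (mod 4) be an odd prime power with p ≠ 3, and χ the quadratic character of 𝔽_q. Then ∑_{x ∈ 𝔽_q} χ((x²+x+1)(3x²+2x+3)) = ∑_{x ∈ 𝔽_q} χ(x(x+1)(x−2)) − χ(3). -/

import Mathlib

open Finset

section Aux

variable {F : Type*} [Field F] [Fintype F] [DecidableEq F]

lemma quadChar_sum_mul_shift (hF : ringChar F ≠ 2) {a : F} (ha : a ≠ 0) :
    ∑ z : F, quadraticChar F (z * (z + a)) = -1 := by
  have h0 : ∑ z : F, quadraticChar F (z * (z + a)) =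
      ∑ z ∈ univ.erase (0 : F), quadraticChar F (z * (z + a)) := by
    rw [Finset.sum_erase]
    simp
  rw [h0]
  have h1 : ∑ z ∈ univ.erase (0 : F), quadraticChar F (z * (z + a)) =
      ∑ w ∈ univ.erase (1 : F), quadraticChar F w := by
    apply Finset.sum_bij' (fun z _ => 1 + a * z⁻¹) (fun w _ => a * (w - 1)⁻¹)
    · intro z hz
      simp only [mem_erase, mem_univ, and_true] at hz ⊢
      intro h
      have : a * z⁻¹ = 0 := by linear_combination h
      rcases mul_eq_zero.mp this with h' | h'
      · exact ha h'
      · exact hz (by simpa using inv_eq_zero.mp h')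
    · intro w hw
      simp only [mem_erase, mem_univ, and_true] at hw ⊢
      have h1 : w - 1 ≠ 0 := sub_ne_zero.mpr hw
      exact mul_ne_zero ha (inv_ne_zero h1)
    · intro z hz
      simp only [mem_erase, mem_univ, and_true] at hz
      field_simp
      simp [ha]
    · intro w hw
      simp only [mem_erase, mem_univ, and_true] at hw
      have h1 : w - 1 ≠ 0 := sub_ne_zero.mpr hw
      field_simp
      ring
    · intro z hz
      simp only [mem_erase, mem_univ, and_true] at hz
      have : z * (z + a) = z ^ 2 * (1 + a * z⁻¹) := by field_simp
      rw [this, map_mul, quadraticChar_sq_one' hz, one_mul]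
  rw [h1, Finset.sum_erase_eq_sub (mem_univ 1), quadraticChar_sum_zero hF, map_one]
  ring

lemma fiber_card (hF : ringChar F ≠ 2) (y : F) :
    ((univ.filter (fun x : F => x ≠ 0 ∧ x + x⁻¹ = y)).card : ℤ) =
      quadraticChar F (y ^ 2 - 4) + 1 := by
  have h2 : (2 : F) ≠ 0 := Ring.two_ne_zero hF
  have hset : univ.filter (fun x : F => x ≠ 0 ∧ x + x⁻¹ = y) =
      univ.filter (fun x : F => x ^ 2 - y * x + 1 = 0) := by
    ext x
    simp only [mem_filter, mem_univ, true_and]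
    constructor
    · rintro ⟨hx, hxy⟩
      field_simp at hxy
      linear_combination hxy
    · intro hx
      have hx0 : x ≠ 0 := by
        intro h; rw [h] at hx; simp at hx
      refine ⟨hx0, ?_⟩
      field_simp
      linear_combination hx
  rw [hset]
  have hcard : (univ.filter (fun x : F => x ^ 2 - y * x + 1 = 0)).card =
      ({z : F | z ^ 2 = y ^ 2 - 4}).toFinset.card := by
    apply Finset.card_bij' (fun x _ => 2 * x - y) (fun z _ => (z + y) / 2)
    · intro x hx
      simp only [mem_filter, mem_univ, true_and] at hx
      simp only [Set.mem_toFinset, Set.mem_setOf_eq]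
      linear_combination 4 * hx
    · intro z hz
      simp only [Set.mem_toFinset, Set.mem_setOf_eq] at hz
      simp only [mem_filter, mem_univ, true_and]
      field_simp
      linear_combination hz
    · intro x hx
      field_simp
      ring
    · intro z hz
      field_simp
      ring
  rw [hcard]
  have := quadraticChar_card_sqrts hF (y ^ 2 - 4)
  exact_mod_cast this

lemma sum_quad (hF : ringChar F ≠ 2) (h3 : (3 : F) ≠ 0) :
    ∑ y : F, quadraticChar F ((y + 1) * (3 * y + 2)) = -(quadraticChar F 3) := by
  have ha : (-(3 : F)⁻¹) ≠ 0 := neg_ne_zero.mpr (inv_ne_zero h3)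
  have hinv : (3 : F) * (3 : F)⁻¹ = 1 := mul_inv_cancel₀ h3
  have h1 : ∀ y : F, quadraticChar F ((y + 1) * (3 * y + 2)) =
      quadraticChar F 3 * quadraticChar F ((y + 1) * ((y + 1) + -(3 : F)⁻¹)) := by
    intro y
    rw [← map_mul]
    congr 1
    linear_combination (y + 1) * hinv
  simp_rw [h1, ← Finset.mul_sum]
  have he : ∑ y : F, quadraticChar F ((y + 1) * ((y + 1) + -(3 : F)⁻¹)) =
      ∑ z : F, quadraticChar F (z * (z + -(3 : F)⁻¹)) :=
    Fintype.sum_bijective (fun y : F => y + 1) (Equiv.addRight (1 : F)).bijective _ _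
      (fun y => rfl)
  rw [he, quadChar_sum_mul_shift hF ha, mul_neg_one]

lemma sum_cubic_change (h2 : (2 : F) ≠ 0) :
    ∑ t : F, quadraticChar F ((1 - 4 * t) * ((1 - t) * (3 - 4 * t))) =
      ∑ x : F, quadraticChar F (x * (x + 1) * (x - 2)) := by
  have h4 : (4 : F) ≠ 0 := by
    have : (4 : F) = 2 * 2 := by norm_num
    rw [this]; exact mul_ne_zero h2 h2
  have hbij : Function.Bijective (fun x : F => (3 - x) / 4) := by
    constructor
    · intro a b h
      field_simp at h
      linear_combination -h
    · intro t
      exact ⟨3 - 4 * t, by field_simp; ring⟩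
  refine (Fintype.sum_bijective (fun x : F => (3 - x) / 4) hbij _ _ ?_).symm
  intro x
  have key : (1 - 4 * ((3 - x) / 4)) * ((1 - (3 - x) / 4) * (3 - 4 * ((3 - x) / 4))) =
      ((2 : F)⁻¹) ^ 2 * (x * (x + 1) * (x - 2)) := by
    field_simp
    ring
  rw [key, map_mul (quadraticChar F) (((2 : F)⁻¹) ^ 2),
    quadraticChar_sq_one' (inv_ne_zero h2), one_mul]

lemma sum_quartic_change :
    ∑ y : F, quadraticChar F ((y ^ 2 - 4) * ((y + 1) * (3 * y + 2))) =
      (∑ t : F, quadraticChar F ((1 - 4 * t) * ((1 - t) * (3 - 4 * t)))) -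
        quadraticChar F 3 := by
  rw [← Finset.add_sum_erase univ _ (mem_univ (-2 : F))]
  have hz : ((-2 : F) ^ 2 - 4) = 0 := by norm_num
  rw [hz, zero_mul, quadraticChar_zero, zero_add]
  have hmain : ∑ y ∈ univ.erase (-2 : F), quadraticChar F ((y ^ 2 - 4) * ((y + 1) * (3 * y + 2))) =
      ∑ t ∈ univ.erase (0 : F), quadraticChar F ((1 - 4 * t) * ((1 - t) * (3 - 4 * t))) := by
    refine Finset.sum_bij' (fun y _ => (y + 2)⁻¹) (fun t _ => t⁻¹ - 2) ?_ ?_ ?_ ?_ ?_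
    · intro y hy
      simp only [mem_erase, mem_univ, and_true] at hy ⊢
      have hy2 : y + 2 ≠ 0 := fun h => hy (by linear_combination h)
      exact inv_ne_zero hy2
    · intro t ht
      simp only [mem_erase, mem_univ, and_true] at ht ⊢
      intro h
      have : t⁻¹ = 0 := by linear_combination h
      exact ht (by simpa using inv_eq_zero.mp this)
    · intro y hy
      show (y + 2)⁻¹⁻¹ - 2 = y
      rw [inv_inv]; ring
    · intro t ht
      show (t⁻¹ - 2 + 2)⁻¹ = t
      have h1 : t⁻¹ - 2 + 2 = t⁻¹ := by ring
      rw [h1, inv_inv]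
    · intro y hy
      simp only [mem_erase, mem_univ, and_true] at hy
      have hy2 : y + 2 ≠ 0 := fun h => hy (by linear_combination h)
      have key : (y ^ 2 - 4) * ((y + 1) * (3 * y + 2)) =
          ((y + 2) ^ 2) ^ 2 *
            ((1 - 4 * (y + 2)⁻¹) * ((1 - (y + 2)⁻¹) * (3 - 4 * (y + 2)⁻¹))) := by
        field_simp
        ring
      rw [key, map_mul, quadraticChar_sq_one' (pow_ne_zero 2 hy2), one_mul]
  rw [hmain, Finset.sum_erase_eq_sub (mem_univ (0 : F))]
  norm_num

lemma step1 (hF : ringChar F ≠ 2) :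
    ∑ x : F, quadraticChar F ((x ^ 2 + x + 1) * (3 * x ^ 2 + 2 * x + 3)) =
      quadraticChar F 3 +
        ∑ y : F, (1 + quadraticChar F (y ^ 2 - 4)) * quadraticChar F ((y + 1) * (3 * y + 2)) := by
  rw [← Finset.add_sum_erase univ _ (mem_univ (0 : F))]
  have h0 : quadraticChar F (((0 : F) ^ 2 + 0 + 1) * (3 * (0 : F) ^ 2 + 2 * 0 + 3)) =
      quadraticChar F 3 := by norm_num
  rw [h0]
  congr 1
  have hpt : ∀ x ∈ univ.erase (0 : F),
      quadraticChar F ((x ^ 2 + x + 1) * (3 * x ^ 2 + 2 * x + 3)) =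
        (fun y => quadraticChar F ((y + 1) * (3 * y + 2))) (x + x⁻¹) := by
    intro x hx
    simp only [mem_erase, mem_univ, and_true] at hx
    have key : (x ^ 2 + x + 1) * (3 * x ^ 2 + 2 * x + 3) =
        x ^ 2 * ((x + x⁻¹ + 1) * (3 * (x + x⁻¹) + 2)) := by
      field_simp
      ring
    simp only
    rw [key, map_mul, quadraticChar_sq_one' hx, one_mul]
  rw [Finset.sum_congr rfl hpt,
    Finset.sum_comp (fun y => quadraticChar F ((y + 1) * (3 * y + 2))) (fun x : F => x + x⁻¹)]
  rw [Finset.sum_subset (Finset.subset_univ ((univ.erase (0 : F)).image (fun x => x + x⁻¹)))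
    (by
      intro b _ hb
      have : ((univ.erase (0 : F)).filter (fun a => a + a⁻¹ = b)) = ∅ := by
        rw [Finset.filter_eq_empty_iff]
        intro a ha hab
        exact hb (Finset.mem_image.mpr ⟨a, ha, hab⟩)
      rw [this, Finset.card_empty, zero_smul])]
  apply Finset.sum_congr rfl
  intro b _
  have hset : (univ.erase (0 : F)).filter (fun a => a + a⁻¹ = b) =
      univ.filter (fun x : F => x ≠ 0 ∧ x + x⁻¹ = b) := by
    ext x
    simp only [mem_filter, mem_erase, mem_univ, and_true, true_and]
  rw [hset, nsmul_eq_mul, fiber_card hF b]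
  ring

end Aux

theorem stmt5 (p n : ℕ) (hp : p.Prime) (hp2 : p ≠ 2) (hp3 : p ≠ 3) (hn : 0 < n)
    (F : Type*) [Field F] [Fintype F] [DecidableEq F]
    (hcard : Fintype.card F = p ^ n) (hq : p ^ n % 4 = 3) :
    ∑ x : F, quadraticChar F ((x ^ 2 + x + 1) * (3 * x ^ 2 + 2 * x + 3)) = (∑ x : F, quadraticChar F (x * (x + 1) * (x - 2))) - quadraticChar F 3 := by
  have hchar : ringChar F = p := by
    have h0 : ((p ^ n : ℕ) : F) = 0 := by
      rw [← hcard]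
      exact FiniteField.cast_card_eq_zero F
    have h1 : ringChar F ∣ p ^ n := (ringChar.spec F (p ^ n)).mp h0
    have hrp : (ringChar F).Prime := by
      have : CharP F (ringChar F) := ringChar.charP F
      exact CharP.char_is_prime F (ringChar F)
    exact (Nat.prime_dvd_prime_iff_eq hrp hp).mp (hrp.dvd_of_dvd_pow h1)
  have hF : ringChar F ≠ 2 := by rw [hchar]; exact fun h => hp2 h
  have h2 : (2 : F) ≠ 0 := Ring.two_ne_zero hF
  have h3 : (3 : F) ≠ 0 := by
    intro h
    have : ringChar F ∣ 3 := (ringChar.spec F 3).mp (by exact_mod_cast h)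
    rw [hchar] at this
    exact hp3 ((Nat.prime_dvd_prime_iff_eq hp (by norm_num)).mp this)
  rw [step1 hF]
  have hsplit : ∑ y : F, (1 + quadraticChar F (y ^ 2 - 4)) *
        quadraticChar F ((y + 1) * (3 * y + 2)) =
      (∑ y : F, quadraticChar F ((y + 1) * (3 * y + 2))) +
        ∑ y : F, quadraticChar F ((y ^ 2 - 4) * ((y + 1) * (3 * y + 2))) := by
    rw [← Finset.sum_add_distrib]
    apply Finset.sum_congr rfl
    intro y _
    rw [map_mul (quadraticChar F) (y ^ 2 - 4) ((y + 1) * (3 * y + 2))]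
    ring
  rw [hsplit, sum_quad hF h3, sum_quartic_change, sum_cubic_change h2]
  ring
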